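/- arXiv:1610.05381 — 4 statements merged into one kernel-verified Lean document; each statement's English description precedes it below -/
import Mathlib

section
/- Let V be a real inner product space, ι a finite index set, and (α_i)_{i∈ι} a family of nonzero vectors of V with ⟪α_i, α_j⟫ ≤ 0 for all i ≠ j. For i ∈ ι write α_i^∨ = (2/⟪α_i, α_i⟫)·α_i. Suppose μ ∈ V can be written μ = ∑_{j∈J} c_j α_j^∨ for some subset J ⊆ ι and real numbers c_j > 0 (j ∈ J), and that μ is dominant, i.e. ⟪μ, α_i⟫ ≥ 0 for all i ∈ ι. Let C ⊆ ι be a set of vertices that is connected in the Coxeter graph on ι (the simple graph with an edge between i and j iff i ≠ j and ⟪α_i, α_j⟫ ≠ 0). If C ∩ J ≠ ∅, then C ⊆ J. -/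
open scoped RealInnerProductSpace

/-- The support of a dominant nonnegative combination of coroots is a union of connected
components of the Coxeter graph: if `μ = ∑_{j ∈ J} c_j α_j^∨` with `c_j > 0`, `μ` is dominant,
and `C` is a connected set of vertices of the Coxeter graph meeting `J`, then `C ⊆ J`. -/
theorem support_of_dominant_coroot_combination_closed_under_connectedness
    {V : Type*} [NormedAddCommGroup V] [InnerProductSpace ℝ V]
    {ι : Type*} [Fintype ι] (α : ι → V) (hα : ∀ i, α i ≠ 0)
    (hobtuse : ∀ i j, i ≠ j → ⟪α i, α j⟫ ≤ 0)
    (μ : V) (J : Finset ι) (c : ι → ℝ) (hc : ∀ j ∈ J, 0 < c j)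
    (hμ : μ = ∑ j ∈ J, c j • ((2 / ⟪α j, α j⟫) • α j))
    (hdom : ∀ i, 0 ≤ ⟪μ, α i⟫)
    (G : SimpleGraph ι)
    (hG : ∀ i j, G.Adj i j ↔ i ≠ j ∧ ⟪α i, α j⟫ ≠ 0)
    (C : Set ι) (hconn : (G.induce C).Connected)
    (hmeet : ∃ i ∈ C, i ∈ J) :
    ∀ i ∈ C, i ∈ J := by
  -- key: J is closed under adjacency
  have hpos : ∀ j, 0 < ⟪α j, α j⟫ := fun j =>
    lt_of_le_of_ne real_inner_self_nonneg
      (fun h => hα j ((@inner_self_eq_zero ℝ V _ _ _ (α j)).mp h.symm))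
  have key : ∀ i ∉ J, ∀ j ∈ J, ⟪α j, α i⟫ = 0 := by
    intro i hi j hj
    have hterm : ∀ k ∈ J, c k * ((2 / ⟪α k, α k⟫) * ⟪α k, α i⟫) ≤ 0 := by
      intro k hk
      have hk0 : k ≠ i := fun h => hi (h ▸ hk)
      have h1 : ⟪α k, α i⟫ ≤ 0 := hobtuse k i hk0
      have h2 : 0 < 2 / ⟪α k, α k⟫ := div_pos two_pos (hpos k)
      exact mul_nonpos_of_nonneg_of_nonpos (hc k hk).le
        (mul_nonpos_of_nonneg_of_nonpos h2.le h1)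
    have hsum : ⟪μ, α i⟫ = ∑ k ∈ J, c k * ((2 / ⟪α k, α k⟫) * ⟪α k, α i⟫) := by
      rw [hμ, sum_inner]
      exact Finset.sum_congr rfl fun k _ => by
        rw [real_inner_smul_left, real_inner_smul_left]
    have hz : ∑ k ∈ J, c k * ((2 / ⟪α k, α k⟫) * ⟪α k, α i⟫) = 0 :=
      le_antisymm (Finset.sum_nonpos hterm) (hsum ▸ hdom i)
    have := (Finset.sum_eq_zero_iff_of_nonpos hterm).mp hz j hj
    have h2 : (2 / ⟪α j, α j⟫ : ℝ) ≠ 0 := (div_pos two_pos (hpos j)).ne'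
    have hcj := (hc j hj).ne'
    rcases mul_eq_zero.mp this with h | h
    · exact absurd h hcj
    rcases mul_eq_zero.mp h with h | h
    · exact absurd h h2
    · exact h
  have closed : ∀ a b : ι, G.Adj a b → a ∈ J → b ∈ J := by
    intro a b hab ha
    by_contra hb
    exact ((hG a b).mp hab).2 (key b hb a ha)
  obtain ⟨i0, hi0C, hi0J⟩ := hmeet
  have walkJ : ∀ (u v : ↥C) (w : (G.induce C).Walk u v), (u : ι) ∈ J → (v : ι) ∈ J := by
    intro u v w
    induction w with
    | nil => exact id
    | cons h p ih => exact fun hu => ih (closed _ _ h hu)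
  intro i hiC
  obtain ⟨w⟩ := hconn ⟨i0, hi0C⟩ ⟨i, hiC⟩
  exact walkJ _ _ w hi0J
end

section
/- Let V be a real inner product space, ι a finite index set, and (α_i)_{i∈ι} a family of nonzero vectors of V with ⟪α_i, α_j⟫ ≤ 0 for all i ≠ j; write α_i^∨ = (2/⟪α_i, α_i⟫)·α_i. Let σ₀ be a linear isometry of V of finite order n₀ ≥ 1 (σ₀^{n₀} = id) permuting the simple roots: there is a bijection π : ι ≃ ι with σ₀(α_i) = α_{π(i)} for all i. Assume that the induced action of π on the set of connected components of the Coxeter graph on ι (edges: i ≠ j with ⟪α_i, α_j⟫ ≠ 0) is transitive. Suppose μ = ∑_{i∈ι} c_i α_i^∨ with all c_i ≥ 0, μ is dominant (⟪μ, α_i⟫ ≥ 0 for all i), and μ ≠ 0. Then μ^◊ := (1/n₀)·∑_{k=0}^{n₀−1} σ₀^k(μ) can be written as μ^◊ = ∑_{i∈ι} d_i α_i^∨ with d_i > 0 for every i ∈ ι. -/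
open scoped RealInnerProductSpace

private lemma coxeter_propagate
    {V : Type*} [NormedAddCommGroup V] [InnerProductSpace ℝ V]
    {ι : Type*} [Fintype ι] (α : ι → V) (hα : ∀ i, α i ≠ 0)
    (hobtuse : ∀ i j, i ≠ j → ⟪α i, α j⟫ ≤ 0)
    (G : SimpleGraph ι)
    (hG : ∀ i j, G.Adj i j ↔ i ≠ j ∧ ⟪α i, α j⟫ ≠ 0)
    (c : ι → ℝ) (hc : ∀ i, 0 ≤ c i)
    (hdom : ∀ j, 0 ≤ ⟪∑ i, c i • ((2 / ⟪α i, α i⟫) • α i), α j⟫) :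
    ∀ i j, G.Reachable i j → 0 < c i → 0 < c j := by
  have hpos : ∀ i, 0 < ⟪α i, α i⟫ := fun i => lt_of_le_of_ne real_inner_self_nonneg (fun h => hα i (inner_self_eq_zero.mp h.symm))
  have step : ∀ i j, G.Adj i j → 0 < c i → 0 < c j := by
    intro i j hadj hci
    rcases (hG i j).mp hadj with ⟨hne, hip⟩
    by_contra h
    have hcj : c j = 0 := le_antisymm (not_lt.mp h) (hc j)
    have hterm : ∀ i' ∈ Finset.univ (α := ι),
        ⟪c i' • ((2 / ⟪α i', α i'⟫) • α i'), α j⟫ ≤ 0 := by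
      intro i' _
      rw [real_inner_smul_left, real_inner_smul_left]
      rcases eq_or_ne i' j with rfl | hne'
      · rw [hcj]; simp
      · have h2 : 0 ≤ 2 / ⟪α i', α i'⟫ := le_of_lt (div_pos two_pos (hpos i'))
        have := hobtuse i' j hne'
        have : 2 / ⟪α i', α i'⟫ * ⟪α i', α j⟫ ≤ 0 := mul_nonpos_of_nonneg_of_nonpos h2 this
        exact mul_nonpos_of_nonneg_of_nonpos (hc i') this
    have hsum := hdom j
    rw [sum_inner] at hsum
    have hzero : ∀ i' ∈ Finset.univ (α := ι),
        ⟪c i' • ((2 / ⟪α i', α i'⟫) • α i'), α j⟫ = 0 := by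
      rw [← Finset.sum_eq_zero_iff_of_nonpos hterm]
      exact le_antisymm (Finset.sum_nonpos hterm) hsum
    have hi := hzero i (Finset.mem_univ i)
    rw [real_inner_smul_left, real_inner_smul_left] at hi
    have h2 : 2 / ⟪α i, α i⟫ ≠ 0 := (div_pos two_pos (hpos i)).ne'
    rcases mul_eq_zero.mp hi with h1 | h1
    · exact hci.ne' h1
    · rcases mul_eq_zero.mp h1 with h1 | h1
      · exact h2 h1
      · exact hip h1
  intro i j hreach hci
  obtain ⟨p⟩ := hreach
  induction p with
  | nil => exact hci
  | cons hadj _ ih => exact ih (step _ _ hadj hci)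

/-- Lemma 4.2: if `σ₀` is a finite-order linear isometry permuting the simple roots, acting
transitively on the connected components of the Coxeter graph, and `μ ≠ 0` is a dominant
nonnegative combination of the coroots, then the average `μ^◊ = (1/n₀) ∑_k σ₀^k(μ)` is a
strictly positive combination of all the coroots. -/
theorem average_of_nonzero_dominant_coweight_strictly_positive
    {V : Type*} [NormedAddCommGroup V] [InnerProductSpace ℝ V]
    {ι : Type*} [Fintype ι] (α : ι → V) (hα : ∀ i, α i ≠ 0)
    (hobtuse : ∀ i j, i ≠ j → ⟪α i, α j⟫ ≤ 0)
    (σ₀ : V ≃ₗᵢ[ℝ] V) (n₀ : ℕ) (hn₀ : 1 ≤ n₀) (horder : σ₀ ^ n₀ = 1)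
    (π : ι ≃ ι) (hπ : ∀ i, σ₀ (α i) = α (π i))
    (G : SimpleGraph ι)
    (hG : ∀ i j, G.Adj i j ↔ i ≠ j ∧ ⟪α i, α j⟫ ≠ 0)
    (htrans : ∀ i j : ι, ∃ k : ℕ, G.Reachable (π^[k] i) j)
    (μ : V) (c : ι → ℝ) (hc : ∀ i, 0 ≤ c i)
    (hμ : μ = ∑ i, c i • ((2 / ⟪α i, α i⟫) • α i))
    (hdom : ∀ i, 0 ≤ ⟪μ, α i⟫) (hμne : μ ≠ 0) :
    ∃ d : ι → ℝ, (∀ i, 0 < d i) ∧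
      (n₀ : ℝ)⁻¹ • ∑ k ∈ Finset.range n₀, (σ₀ ^ k) μ
        = ∑ i, d i • ((2 / ⟪α i, α i⟫) • α i) := by
  classical
  have hposin : ∀ i, 0 < ⟪α i, α i⟫ := fun i =>
    lt_of_le_of_ne real_inner_self_nonneg (fun h => hα i (inner_self_eq_zero.mp h.symm))
  have hinj : Function.Injective α := by
    intro i j hij
    by_contra hne
    have h1 := hobtuse i j hne
    rw [hij] at h1
    exact absurd h1 (not_le.mpr (hposin j))
  have hiter : ∀ k i, (σ₀ ^ k) (α i) = α (π^[k] i) := by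
    intro k
    induction k with
    | zero => intro i; simp
    | succ k ih =>
      intro i
      rw [pow_succ, Function.iterate_succ_apply]
      show (σ₀ ^ k) (σ₀ (α i)) = _
      rw [hπ, ih]
  have hri : ∀ k (i : ι), π^[k] ((π.symm)^[k] i) = i := fun k i => (π.right_inv.iterate k) i
  have hli : ∀ k (i : ι), (π.symm)^[k] (π^[k] i) = i := fun k i => (π.left_inv.iterate k) i
  have hfix : ∀ i, π^[n₀] i = i := by
    intro i
    apply hinj
    rw [← hiter, horder]
    rfl
  have hinner : ∀ k i, ⟪α (π^[k] i), α (π^[k] i)⟫ = ⟪α i, α i⟫ := by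
    intro k i
    rw [← hiter]
    exact (σ₀ ^ k).inner_map_map _ _
  have hcoroot : ∀ k i, (σ₀ ^ k) ((2 / ⟪α i, α i⟫) • α i)
      = (2 / ⟪α (π^[k] i), α (π^[k] i)⟫) • α (π^[k] i) := by
    intro k i
    rw [map_smul, hiter, hinner]
  -- the equivalence given by π^[k]
  let e : ℕ → ι ≃ ι := fun k => ⟨π^[k], (π.symm)^[k], hli k, hri k⟩
  have hsum : ∀ k, (σ₀ ^ k) μ = ∑ i, c ((π.symm)^[k] i) • ((2 / ⟪α i, α i⟫) • α i) := by
    intro k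
    rw [hμ, map_sum]
    refine Fintype.sum_equiv (e k) _ _ (fun i => ?_)
    show (σ₀ ^ k) (c i • ((2 / ⟪α i, α i⟫) • α i))
      = c ((π.symm)^[k] (π^[k] i)) • ((2 / ⟪α (π^[k] i), α (π^[k] i)⟫) • α (π^[k] i))
    rw [map_smul, hcoroot, hli]
  set C : ι → ℝ := fun i => ∑ k ∈ Finset.range n₀, c ((π.symm)^[k] i) with hC
  have hbig : ∑ k ∈ Finset.range n₀, (σ₀ ^ k) μ
      = ∑ i, C i • ((2 / ⟪α i, α i⟫) • α i) := by
    rw [Finset.sum_congr rfl (fun k _ => hsum k), Finset.sum_comm]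
    exact Finset.sum_congr rfl (fun i _ => (Finset.sum_smul).symm)
  have hC0 : ∀ i, 0 ≤ C i := fun i => Finset.sum_nonneg (fun k _ => hc _)
  have hCdom : ∀ j, 0 ≤ ⟪∑ i, C i • ((2 / ⟪α i, α i⟫) • α i), α j⟫ := by
    intro j
    rw [← hbig, sum_inner]
    refine Finset.sum_nonneg (fun k _ => ?_)
    have h1 : α j = (σ₀ ^ k) (α ((π.symm)^[k] j)) := by rw [hiter, hri]
    rw [h1, (σ₀ ^ k).inner_map_map]
    exact hdom _
  obtain ⟨i₀, hi₀⟩ : ∃ i₀, 0 < c i₀ := by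
    by_contra h
    push_neg at h
    have : ∀ i, c i = 0 := fun i => le_antisymm (h i) (hc i)
    apply hμne
    rw [hμ]
    exact Finset.sum_eq_zero (fun i _ => by rw [this i, zero_smul])
  have hmulfix : ∀ q (i : ι), π^[n₀ * q] i = i := by
    intro q i
    rw [Function.iterate_mul]
    have : π^[n₀] = id := funext hfix
    rw [this, Function.iterate_id, id]
  have hCpos : ∀ k, 0 < C (π^[k] i₀) := by
    intro k
    refine Finset.sum_pos' (fun m _ => hc _) ⟨k % n₀, Finset.mem_range.mpr (Nat.mod_lt _ hn₀), ?_⟩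
    have hk : π^[k] i₀ = π^[k % n₀] i₀ := by
      conv_lhs => rw [← Nat.mod_add_div k n₀, Function.iterate_add_apply, hmulfix]
    rw [hk, hli]
    exact hi₀
  have hdpos : ∀ i, 0 < C i := by
    intro i
    obtain ⟨k, hk⟩ := htrans i₀ i
    exact coxeter_propagate α hα hobtuse G hG C hC0 hCdom _ _ hk (hCpos k)
  refine ⟨fun i => (n₀ : ℝ)⁻¹ * C i, fun i => mul_pos (inv_pos.mpr (by exact_mod_cast hn₀)) (hdpos i), ?_⟩
  rw [hbig, Finset.smul_sum]
  exact Finset.sum_congr rfl (fun i _ => by rw [smul_smul])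
end

section
/- Let V be a real inner product space, Γ a finite set, i ∈ Γ, and (α_j)_{j∈Γ} a family of nonzero vectors in V. For j ∈ Γ let s_j : V → V be the orthogonal reflection s_j(x) = x − (2⟪x, α_j⟫/⟪α_j, α_j⟫)·α_j. Consider the graph on Γ with an edge between j and j′ iff j ≠ j′ and ⟪α_j, α_{j′}⟫ ≠ 0, and assume every j ∈ Γ is at finite graph distance d(j) from i. Assume furthermore that any two distinct j, j′ ∈ Γ with d(j) = d(j′) satisfy ⟪α_j, α_{j′}⟫ = 0 (as holds when the graph is a forest), so that for each n ∈ ℕ the product c_n := ∏_{j∈Γ, d(j)=n} s_j is a well-defined composition of pairwise commuting reflections. Let N be an integer with d(j) ≤ N for all j ∈ Γ, set c = c_0 ∘ c_1 ∘ ⋯ ∘ c_N, and for j ∈ Γ set γ_j = (c_N ∘ c_{N−1} ∘ ⋯ ∘ c_{d(j)+1})(α_j). Then for every v ∈ V: c(v) = v − ∑_{j∈Γ} ⟪v, γ_j⟫ · (2/⟪α_j, α_j⟫)·α_j. -/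
open scoped RealInnerProductSpace

section TCEaux

variable {V : Type*} [NormedAddCommGroup V] [InnerProductSpace ℝ V] {Γ : Type*}

private lemma tce_inner_listsum_zero (y : V) :
    ∀ (l : List V), (∀ w ∈ l, ⟪w, y⟫ = 0) → ⟪l.sum, y⟫ = 0 := by
  intro l
  induction l with
  | nil => simp
  | cons a t ih =>
    intro h
    rw [List.sum_cons, inner_add_left, h a (by simp),
      ih (fun w hw => h w (by simp [hw]))]
    simp

private lemma tce_foldr_reflections (α : Γ → V) (s : Γ → V → V)
    (hs : ∀ j x, s j x = x - ((2 * ⟪x, α j⟫) / ⟪α j, α j⟫) • α j) :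
    ∀ (l : List Γ), l.Pairwise (fun j j' => ⟪α j, α j'⟫ = 0) → ∀ x : V,
      (l.foldr (fun j f => s j ∘ f) id) x
        = x - (l.map (fun j => ⟪x, α j⟫ • ((2 / ⟪α j, α j⟫) • α j))).sum := by
  intro l
  induction l with
  | nil => intro _ x; simp
  | cons a t ih =>
    intro hp x
    obtain ⟨ha, hpt⟩ := List.pairwise_cons.mp hp
    simp only [List.foldr_cons, Function.comp_apply]
    rw [ih hpt x, hs]
    have h0 : ⟪(t.map (fun j => ⟪x, α j⟫ • ((2 / ⟪α j, α j⟫) • α j))).sum, α a⟫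
        = 0 := by
      apply tce_inner_listsum_zero
      intro w hw
      obtain ⟨j, hj, rfl⟩ := List.mem_map.mp hw
      have h2 : ⟪α j, α a⟫ = (0:ℝ) := by
        rw [← real_inner_comm]; exact ha j hj
      rw [real_inner_smul_left, real_inner_smul_left, h2]
      ring
    rw [inner_sub_left, h0, sub_zero, List.map_cons, List.sum_cons]
    have h1 : ((2 * ⟪x, α a⟫) / ⟪α a, α a⟫) • α a
        = ⟪x, α a⟫ • ((2 / ⟪α a, α a⟫) • α a) := by
      rw [smul_smul]; congr 1; ring
    rw [h1]
    abel

end TCEaux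

/-- Lemma 5.6: the action of the element `c = c_0 ∘ c_1 ∘ ⋯ ∘ c_N`, where `c_n` is the
product of the reflections `s_j` over the vertices `j` at distance `n` from `i`, is given by
`c(v) = v − ∑_j ⟪v, γ_j⟫ α_j^∨` with `γ_j = (c_N ∘ ⋯ ∘ c_{d(j)+1})(α_j)`. -/
theorem twisted_coxeter_element_action
    {V : Type*} [NormedAddCommGroup V] [InnerProductSpace ℝ V]
    {Γ : Type*} [Fintype Γ] (i : Γ) (α : Γ → V) (hα : ∀ j, α j ≠ 0)
    (G : SimpleGraph Γ) (hG : ∀ j j', G.Adj j j' ↔ j ≠ j' ∧ ⟪α j, α j'⟫ ≠ 0)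
    (hreach : ∀ j, G.Reachable i j)
    (d : Γ → ℕ) (hd : ∀ j, d j = G.dist i j)
    (horth : ∀ j j', j ≠ j' → d j = d j' → ⟪α j, α j'⟫ = 0)
    (s : Γ → V → V)
    (hs : ∀ j x, s j x = x - ((2 * ⟪x, α j⟫) / ⟪α j, α j⟫) • α j)
    (c : ℕ → V → V)
    (hc : ∀ n, ∃ l : List Γ, l.Nodup ∧ (∀ j, j ∈ l ↔ d j = n) ∧
      c n = l.foldr (fun j f => s j ∘ f) id)
    (N : ℕ) (hN : ∀ j, d j ≤ N)
    (γ : Γ → V)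
    (hγ : ∀ j, γ j =
      ((List.range' (d j + 1) (N - d j)).foldr (fun k f => f ∘ c k) id) (α j)) :
    ∀ v : V,
      ((List.range (N + 1)).foldr (fun k f => c k ∘ f) id) v
        = v - ∑ j, ⟪v, γ j⟫ • ((2 / ⟪α j, α j⟫) • α j) := by
  classical
  -- explicit formula for `c n`
  have hcformula : ∀ n (x : V), c n x
      = x - ∑ j ∈ Finset.univ.filter (fun j => d j = n),
          ⟪x, α j⟫ • ((2 / ⟪α j, α j⟫) • α j) := by
    intro n x
    obtain ⟨l, hnd, hmem, hceq⟩ := hc n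
    have hpair : l.Pairwise (fun j j' => ⟪α j, α j'⟫ = 0) :=
      hnd.imp_of_mem (fun {a b} haa hbb hab =>
        horth a b hab (by rw [(hmem a).mp haa, (hmem b).mp hbb]))
    rw [hceq, tce_foldr_reflections α s hs l hpair x]
    congr 1
    rw [← List.sum_toFinset _ hnd]
    apply Finset.sum_congr
    · ext j; simp [List.mem_toFinset, hmem j]
    · intros; rfl
  -- `c n` is self-adjoint
  have hadj : ∀ n (x y : V), ⟪c n x, y⟫ = ⟪x, c n y⟫ := by
    intro n x y
    rw [hcformula, hcformula, inner_sub_left, inner_sub_right, sum_inner,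
      inner_sum]
    congr 1
    apply Finset.sum_congr rfl
    intro j _
    simp only [real_inner_smul_left, real_inner_smul_right]
    rw [real_inner_comm y (α j), real_inner_comm (α j) x]
    ring
  -- adjoint of a fold of the `c n`
  have hfoldadj : ∀ (l : List ℕ) (x y : V),
      ⟪(l.foldr (fun k f => c k ∘ f) id) x, y⟫
        = ⟪x, (l.foldr (fun k f => f ∘ c k) id) y⟫ := by
    intro l
    induction l with
    | nil => intro x y; rfl
    | cons a t ih =>
      intro x y
      simp only [List.foldr_cons, Function.comp_apply]
      rw [hadj, ih]
  -- main downward induction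
  have key : ∀ k, k ≤ N + 1 → ∀ v : V,
      ((List.range' (N + 1 - k) k).foldr (fun j f => c j ∘ f) id) v
        = v - ∑ j ∈ Finset.univ.filter (fun j => N + 1 - k ≤ d j),
            ⟪v, γ j⟫ • ((2 / ⟪α j, α j⟫) • α j) := by
    intro k
    induction k with
    | zero =>
      intro _ v
      have hempty : Finset.univ.filter (fun j => N + 1 - 0 ≤ d j) = ∅ := by
        apply Finset.eq_empty_of_forall_notMem
        intro j hj
        simp only [Finset.mem_filter] at hj
        have := hN j
        omega
      rw [hempty]
      simp
    | succ k ih =>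
      intro hk v
      have hk' : k ≤ N := by omega
      have harith : N + 1 - (k + 1) = N - k := by omega
      rw [harith]
      have hrange : List.range' (N - k) (k + 1)
          = (N - k) :: List.range' (N + 1 - k) k := by
        rw [show N + 1 - k = N - k + 1 from by omega]
        rfl
      rw [hrange]
      simp only [List.foldr_cons, Function.comp_apply]
      set F := (List.range' (N + 1 - k) k).foldr (fun j f => c j ∘ f) id with hF
      rw [hcformula]
      have hsum : ∑ j ∈ Finset.univ.filter (fun j => d j = N - k),
            ⟪F v, α j⟫ • ((2 / ⟪α j, α j⟫) • α j)
          = ∑ j ∈ Finset.univ.filter (fun j => d j = N - k),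
            ⟪v, γ j⟫ • ((2 / ⟪α j, α j⟫) • α j) := by
        apply Finset.sum_congr rfl
        intro j hj
        have hdj : d j = N - k := by
          simpa using hj
        have h1 : ⟪F v, α j⟫ = ⟪v, γ j⟫ := by
          rw [hF, hfoldadj, hγ j]
          have e1 : d j + 1 = N + 1 - k := by omega
          have e2 : N - d j = k := by omega
          rw [e1, e2]
        rw [h1]
      rw [hsum, ih (by omega) v]
      have hsplit : ∑ j ∈ Finset.univ.filter (fun j => N - k ≤ d j),
            ⟪v, γ j⟫ • ((2 / ⟪α j, α j⟫) • α j)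
          = ∑ j ∈ Finset.univ.filter (fun j => d j = N - k),
              ⟪v, γ j⟫ • ((2 / ⟪α j, α j⟫) • α j)
            + ∑ j ∈ Finset.univ.filter (fun j => N + 1 - k ≤ d j),
              ⟪v, γ j⟫ • ((2 / ⟪α j, α j⟫) • α j) := by
        rw [← Finset.sum_filter_add_sum_filter_not
          (Finset.univ.filter (fun j => N - k ≤ d j)) (fun j => d j = N - k)]
        congr 1
        · apply Finset.sum_congr _ (fun _ _ => rfl)
          ext j
          simp only [Finset.mem_filter, Finset.mem_univ, true_and]
          omega
        · apply Finset.sum_congr _ (fun _ _ => rfl)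
          ext j
          simp only [Finset.mem_filter, Finset.mem_univ, true_and]
          omega
      rw [hsplit]
      abel
  intro v
  have hfin := key (N + 1) le_rfl v
  rw [Nat.sub_self] at hfin
  rw [List.range_eq_range', hfin]
  congr 1
  rw [Finset.filter_true_of_mem (fun j _ => Nat.zero_le _)]
end

section
/- Let M be a Coxeter matrix on a finite index set ι whose associated Coxeter group W is finite. Let σ : ι ≃ ι be a bijection with M(σ(i), σ(j)) = M(i, j) for all i, j ∈ ι (a diagram automorphism). Consider the Coxeter graph on ι: the simple graph with an edge between i and j iff i ≠ j and M(i, j) ≥ 3; σ induces a permutation of its connected components. Call a subset of ι a σ-component if it is the union of the connected components in a single orbit of this induced permutation. Let I ⊆ ι be a subset containing exactly one element of each σ-component. Then there exists a subset Γ ⊆ ι with I ⊆ Γ such that: (a) Γ contains exactly one element of each ⟨σ⟩-orbit on ι, and (b) every connected component of the induced subgraph on Γ contains exactly one element of I. -/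
/-- Lemma 5.5: given a finite Coxeter group with a diagram automorphism `σ` and a set `I`
containing exactly one element of each `σ`-component of the Coxeter graph, there is a subset
`Γ ⊇ I` containing exactly one element of each `⟨σ⟩`-orbit such that every connected component
of the induced subgraph on `Γ` contains exactly one element of `I`. -/
theorem exists_based_subdiagram_meeting_each_sigma_orbit
    {ι : Type*} [Fintype ι] (M : CoxeterMatrix ι)
    (hM2 : ∀ i j : ι, i ≠ j → 2 ≤ M i j)
    (hfin : Finite M.Group)
    (σ : ι ≃ ι) (hσ : ∀ i j : ι, M (σ i) (σ j) = M i j)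
    (G : SimpleGraph ι) (hG : ∀ i j : ι, G.Adj i j ↔ i ≠ j ∧ 3 ≤ M i j)
    (I : Set ι)
    (hI : ∀ i : ι, ∃! i₀ : ι, i₀ ∈ I ∧ ∃ n : ℕ, G.Reachable ((⇑σ)^[n] i) i₀) :
    ∃ Γ : Set ι, I ⊆ Γ ∧
      (∀ i : ι, ∃! g : ι, g ∈ Γ ∧ ∃ n : ℕ, (⇑σ)^[n] i = g) ∧
      (∀ g ∈ Γ, ∃! i₀ : ι, i₀ ∈ I ∧
        (SimpleGraph.fromRel (fun a b => a ∈ Γ ∧ b ∈ Γ ∧ G.Adj a b)).Reachable g i₀) := by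
  classical
  -- σ has finite order
  have hσfin : IsOfFinOrder σ := isOfFinOrder_of_finite σ
  set m := orderOf σ with hm
  have hm0 : 0 < m := hσfin.orderOf_pos
  have hiter : ∀ (n : ℕ) (x : ι), (⇑σ)^[n] x = (σ ^ n : ι ≃ ι) x := by
    intro n x
    rw [Equiv.Perm.iterate_eq_pow]
  have hmid : ∀ (k : ℕ) (x : ι), (⇑σ)^[m * k] x = x := by
    intro k x
    rw [hiter]
    have : (σ ^ (m * k) : ι ≃ ι) = 1 := by
      rw [pow_mul, hm, pow_orderOf_eq_one, one_pow]
    rw [this]; rfl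
  -- symmetry of the orbit relation
  have orb_symm : ∀ {i j : ι}, (∃ n, (⇑σ)^[n] i = j) → ∃ n, (⇑σ)^[n] j = i := by
    rintro i j ⟨n, rfl⟩
    refine ⟨n * (m - 1), ?_⟩
    rw [← Function.iterate_add_apply]
    have harith : n * (m - 1) + n = m * n := by
      rw [← Nat.mul_succ, Nat.succ_eq_add_one, Nat.sub_add_cancel hm0, Nat.mul_comm]
    rw [harith, hmid]
  -- σ is a graph automorphism
  have adj_iff : ∀ a b : ι, G.Adj (σ a) (σ b) ↔ G.Adj a b := by
    intro a b
    rw [hG, hG, hσ, σ.injective.ne_iff]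
  have adj_iter : ∀ (n : ℕ) (a b : ι), G.Adj a b → G.Adj ((⇑σ)^[n] a) ((⇑σ)^[n] b) := by
    intro n
    induction n with
    | zero => intro a b h; simpa using h
    | succ k ih =>
        intro a b h
        rw [Function.iterate_succ_apply', Function.iterate_succ_apply']
        exact (adj_iff _ _).2 (ih a b h)
  -- monotonicity facts about fromRel
  have fromRel_mono : ∀ {r r' : ι → ι → Prop}, (∀ a b, r a b → r' a b) →
      SimpleGraph.fromRel r ≤ SimpleGraph.fromRel r' := by
    intro r r' h a b hab
    rw [SimpleGraph.fromRel_adj] at hab ⊢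
    exact ⟨hab.1, hab.2.elim (fun x => Or.inl (h _ _ x)) (fun x => Or.inr (h _ _ x))⟩
  have fromRel_le : ∀ {r : ι → ι → Prop}, (∀ a b, r a b → G.Adj a b) →
      SimpleGraph.fromRel r ≤ G := by
    intro r h a b hab
    rw [SimpleGraph.fromRel_adj] at hab
    exact hab.2.elim (h _ _) (fun x => (h _ _ x).symm)
  -- key construction: a connected transversal for each base point i₀ ∈ I
  have key : ∀ i₀ ∈ I, ∃ S : Finset ι,
      i₀ ∈ S ∧ (∀ g ∈ S, G.Reachable g i₀) ∧
      (∀ g ∈ S, ∀ g' ∈ S, (∃ n, (⇑σ)^[n] g = g') → g = g') ∧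
      (∀ g ∈ S, (SimpleGraph.fromRel
          (fun a b => a ∈ S ∧ b ∈ S ∧ G.Adj a b)).Reachable g i₀) ∧
      (∀ x : ι, (∃ n, G.Reachable ((⇑σ)^[n] x) i₀) → ∃ n, (⇑σ)^[n] x ∈ S) := by
    intro i₀ _
    set P : Finset ι → Prop := fun T =>
      i₀ ∈ T ∧ (∀ g ∈ T, G.Reachable g i₀) ∧
      (∀ g ∈ T, ∀ g' ∈ T, (∃ n, (⇑σ)^[n] g = g') → g = g') ∧
      (∀ g ∈ T, (SimpleGraph.fromRel
          (fun a b => a ∈ T ∧ b ∈ T ∧ G.Adj a b)).Reachable g i₀) with hPdef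
    have hP1 : P {i₀} := by
      refine ⟨Finset.mem_singleton_self i₀, ?_, ?_, ?_⟩
      · intro g hg
        rw [Finset.mem_singleton] at hg
        subst hg; exact SimpleGraph.Reachable.refl _
      · intro g hg g' hg' _
        rw [Finset.mem_singleton] at hg hg'
        rw [hg, hg']
      · intro g hg
        rw [Finset.mem_singleton] at hg
        subst hg; exact SimpleGraph.Reachable.refl _
    obtain ⟨S, hSP, hSmax⟩ : ∃ S, P S ∧ ∀ T, P T → T.card ≤ S.card := by
      obtain ⟨S, hS, hmax⟩ := Finset.exists_max_image
        (Finset.univ.filter P) Finset.card ⟨{i₀}, Finset.mem_filter.2 ⟨Finset.mem_univ _, hP1⟩⟩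
      refine ⟨S, (Finset.mem_filter.1 hS).2, fun T hT => hmax T (Finset.mem_filter.2 ⟨Finset.mem_univ _, hT⟩)⟩
    obtain ⟨hS1, hS2, hS3, hS4⟩ := hSP
    refine ⟨S, hS1, hS2, hS3, hS4, ?_⟩
    intro x hx
    by_contra hnx
    push_neg at hnx
    -- the saturation of S under the orbit relation
    set U : Set ι := {y | ∃ n, (⇑σ)^[n] y ∈ S} with hUdef
    obtain ⟨n, hxn⟩ := hx
    have hx' : (⇑σ)^[n] x ∉ U := by
      rintro ⟨k, hk⟩
      rw [← Function.iterate_add_apply] at hk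
      exact hnx _ hk
    have hi₀U : i₀ ∈ U := ⟨0, hS1⟩
    obtain ⟨w⟩ := hxn.symm
    obtain ⟨d, _, hdU, hdU'⟩ := w.exists_boundary_dart U hi₀U hx'
    obtain ⟨k, hk⟩ := hdU
    set a := (⇑σ)^[k] d.fst with hadef
    set b := (⇑σ)^[k] d.snd with hbdef
    have haS : a ∈ S := hk
    have hbAdj : G.Adj a b := adj_iter k _ _ d.adj
    have hbU : b ∉ U := by
      rintro ⟨t, ht⟩
      rw [hbdef, ← Function.iterate_add_apply] at ht
      exact hdU' ⟨t + k, ht⟩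
    have hbS : b ∉ S := fun h => hbU ⟨0, h⟩
    have hbne : ∀ g ∈ S, b ≠ g := by
      intro g hg he; exact hbS (he ▸ hg)
    have hPnew : P (insert b S) := by
      refine ⟨Finset.mem_insert_of_mem hS1, ?_, ?_, ?_⟩
      · intro g hg
        rcases Finset.mem_insert.1 hg with rfl | hg
        · exact (hbAdj.symm.reachable).trans (hS2 a haS)
        · exact hS2 g hg
      · intro g hg g' hg' horb
        rcases Finset.mem_insert.1 hg with rfl | hg <;>
          rcases Finset.mem_insert.1 hg' with rfl | hg'
        · rfl
        · exact absurd horb (by rintro ⟨t, rfl⟩; exact hbU ⟨t, hg'⟩)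
        · -- g ∈ S, orbit reaches b : contradiction
          obtain ⟨t, ht⟩ := orb_symm horb
          exact absurd (⟨t, ht.symm ▸ hg⟩ : b ∈ U) hbU
        · exact hS3 g hg g' hg' horb
      · intro g hg
        have hmono : SimpleGraph.fromRel (fun x y => x ∈ S ∧ y ∈ S ∧ G.Adj x y) ≤
            SimpleGraph.fromRel (fun x y => x ∈ insert b S ∧ y ∈ insert b S ∧ G.Adj x y) :=
          fromRel_mono (fun x y hxy =>
            ⟨Finset.mem_insert_of_mem hxy.1, Finset.mem_insert_of_mem hxy.2.1, hxy.2.2⟩)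
        rcases Finset.mem_insert.1 hg with rfl | hg
        · have hedge : (SimpleGraph.fromRel
              (fun x y => x ∈ insert b S ∧ y ∈ insert b S ∧ G.Adj x y)).Adj b a := by
            rw [SimpleGraph.fromRel_adj]
            exact ⟨hbne a haS,
              Or.inl ⟨Finset.mem_insert_self _ _, Finset.mem_insert_of_mem haS, hbAdj.symm⟩⟩
          exact hedge.reachable.trans ((hS4 a haS).mono hmono)
        · exact (hS4 g hg).mono hmono
    have hcard := hSmax _ hPnew
    rw [Finset.card_insert_of_notMem hbS] at hcard
    omega
  choose! S hS1 hS2 hS3 hS4 hS5 using key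
  refine ⟨{g | ∃ i₀, i₀ ∈ I ∧ g ∈ S i₀}, ?_, ?_, ?_⟩
  · intro i₀ hi₀
    exact ⟨i₀, hi₀, hS1 i₀ hi₀⟩
  · intro i
    obtain ⟨i₀, ⟨hi₀I, hreach⟩, huniq⟩ := hI i
    obtain ⟨n, hn⟩ := hS5 i₀ hi₀I i hreach
    refine ⟨(⇑σ)^[n] i, ⟨⟨i₀, hi₀I, hn⟩, n, rfl⟩, ?_⟩
    rintro g' ⟨⟨i₀', hi₀'I, hg'S⟩, k, rfl⟩
    have hi₀'eq : i₀' = i₀ := huniq i₀' ⟨hi₀'I, k, hS2 i₀' hi₀'I _ hg'S⟩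
    subst hi₀'eq
    refine hS3 i₀' hi₀'I _ hg'S _ hn ?_
    obtain ⟨s, hs⟩ := orb_symm ⟨k, rfl⟩
    exact ⟨n + s, by rw [Function.iterate_add_apply, hs]⟩
  · rintro g ⟨i₀, hi₀I, hgS⟩
    refine ⟨i₀, ⟨hi₀I, ?_⟩, ?_⟩
    · refine (hS4 i₀ hi₀I g hgS).mono (fromRel_mono ?_)
      intro x y hxy
      exact ⟨⟨i₀, hi₀I, hxy.1⟩, ⟨i₀, hi₀I, hxy.2.1⟩, hxy.2.2⟩
    · rintro i₀' ⟨hi₀'I, hreach'⟩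
      have hGr' : G.Reachable g i₀' := hreach'.mono (fromRel_le (fun x y h => h.2.2))
      have hGr : G.Reachable g i₀ := hS2 i₀ hi₀I g hgS
      obtain ⟨u, _, hu⟩ := hI g
      have h1 : i₀' = u := hu i₀' ⟨hi₀'I, 0, by simpa using hGr'⟩
      have h2 : i₀ = u := hu i₀ ⟨hi₀I, 0, by simpa using hGr⟩
      rw [h1, h2]
end
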